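/- Let δ ∈ (0,1), r* > 0, and let f : [0, r*] → ℝ be continuously differentiable with f(0) = 0. Define g(r) = ∫₀^r f(s)^2 ds, and suppose a := sup_{r ∈ (0,r*)} g(r)/r and b := sup_{r ∈ (0,r*)} r^δ * |f'(r)| are finite. Then for all r ∈ [0, r*], |f(r)|^3 ≤ (3*a*b/(1-δ)) * r^(1-δ). -/

import Mathlib

open Set Filter intervalIntegral MeasureTheory Real

theorem stmt_12 (δ rstar a b : ℝ) (hδ0 : 0 < δ) (hδ1 : δ < 1) (hr : 0 < rstar)
    (f f' : ℝ → ℝ) (hf0 : f 0 = 0)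
    (hderiv : ∀ r ∈ Set.Icc (0 : ℝ) rstar, HasDerivAt f (f' r) r)
    (hf'cont : ContinuousOn f' (Set.Icc 0 rstar))
    (ha : ∀ r ∈ Set.Ioo (0 : ℝ) rstar, (∫ s in (0 : ℝ)..r, f s ^ 2) / r ≤ a)
    (hb : ∀ r ∈ Set.Ioo (0 : ℝ) rstar, r ^ δ * |f' r| ≤ b) :
    ∀ r ∈ Set.Icc (0 : ℝ) rstar, |f r| ^ 3 ≤ (3 * a * b / (1 - δ)) * r ^ (1 - δ) := by
  have h1δ : (0:ℝ) < 1 - δ := by linarith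
  have hfc : ∀ x ∈ Set.Icc (0:ℝ) rstar, ContinuousAt f x := fun x hx => (hderiv x hx).continuousAt
  have hfcOn : ContinuousOn f (Set.Icc 0 rstar) := fun x hx => (hfc x hx).continuousWithinAt
  have hb0 : 0 ≤ b := le_trans (by positivity) (hb (rstar/2) ⟨by linarith, by linarith⟩)
  set G : ℝ → ℝ := fun s => ∫ t in (0:ℝ)..s, f t ^ 2 with hGdef
  have hGnn : ∀ s, 0 ≤ s → 0 ≤ G s := fun s hs =>
    intervalIntegral.integral_nonneg hs (fun x _ => sq_nonneg _)
  have ha0 : 0 ≤ a := le_trans (div_nonneg (hGnn _ (by linarith)) (by linarith))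
      (ha (rstar/2) ⟨by linarith, by linarith⟩)
  have hGa : ∀ s ∈ Set.Ioo (0:ℝ) rstar, G s ≤ a * s := by
    intro s hs
    have h := ha s hs
    rw [div_le_iff₀ hs.1] at h
    linarith
  have key : ∀ r ∈ Set.Ioo (0:ℝ) rstar, |f r| ^ 3 ≤ 3 * a * b / (1 - δ) * r ^ (1 - δ) := by
    intro r hrr
    have hr0 : 0 < r := hrr.1
    have hrs : r < rstar := hrr.2
    have hεstep : ∀ ε ∈ Set.Ioo (0:ℝ) r,
        |f r| ^ 3 ≤ |f ε| ^ 3 + 3 * a * b / (1 - δ) * r ^ (1 - δ) := by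
      intro ε hε
      have hε0 : 0 < ε := hε.1
      have hεr : ε ≤ r := le_of_lt hε.2
      have hsub : Set.uIcc ε r ⊆ Set.Ioo 0 rstar := by
        rw [Set.uIcc_of_le hεr]
        intro x hx; exact ⟨lt_of_lt_of_le hε0 hx.1, lt_of_le_of_lt hx.2 hrs⟩
      have hsubIcc : Set.uIcc ε r ⊆ Set.Icc 0 rstar := fun x hx =>
        ⟨(hsub hx).1.le, (hsub hx).2.le⟩
      -- FTC for f^3
      have hcube : (∫ x in ε..r, 3 * f x ^ 2 * f' x) = f r ^ 3 - f ε ^ 3 := by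
        refine intervalIntegral.integral_eq_sub_of_hasDerivAt (f := fun x => f x ^ 3)
          (f' := fun x => 3 * f x ^ 2 * f' x) (fun x hx => ?_) ?_
        · simpa using (hderiv x (hsubIcc hx)).fun_pow 3
        · apply ContinuousOn.intervalIntegrable
          exact (continuousOn_const.mul ((hfcOn.mono hsubIcc).pow 2)).mul (hf'cont.mono hsubIcc)
      -- continuity helpers on [ε, r]
      have hne : ∀ x ∈ Set.uIcc ε r, x ≠ 0 := fun x hx => ne_of_gt (hsub hx).1
      have hcδ : ContinuousOn (fun x : ℝ => x ^ (-δ)) (Set.uIcc ε r) := fun x hx =>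
        (Real.continuousAt_rpow_const x _ (Or.inl (hne x hx))).continuousWithinAt
      have hcδ1 : ContinuousOn (fun x : ℝ => x ^ (-δ - 1)) (Set.uIcc ε r) := fun x hx =>
        (Real.continuousAt_rpow_const x _ (Or.inl (hne x hx))).continuousWithinAt
      -- derivative of G
      have hGd : ∀ x ∈ Set.uIcc ε r, HasDerivAt G (f x ^ 2) x := by
        intro x hx
        have hx' : x ∈ Set.Ioo 0 rstar := hsub hx
        refine intervalIntegral.integral_hasDerivAt_right ?_ ?_ ?_
        · apply ContinuousOn.intervalIntegrable
          refine (hfcOn.mono ?_).pow 2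
          rw [Set.uIcc_of_le hx'.1.le]
          exact fun t ht => ⟨ht.1, le_trans ht.2 hx'.2.le⟩
        · exact ContinuousOn.stronglyMeasurableAtFilter isOpen_Ioo
            ((continuousOn_of_forall_continuousAt (fun y hy =>
              hfc y ⟨hy.1.le, hy.2.le⟩)).pow 2) x hx'
        · exact (hfc x ⟨hx'.1.le, hx'.2.le⟩).pow 2
      -- derivative of x ^ (-δ)
      have hud : ∀ x ∈ Set.uIcc ε r, HasDerivAt (fun x : ℝ => x ^ (-δ)) (-δ * x ^ (-δ - 1)) x :=
        fun x hx => Real.hasDerivAt_rpow_const (Or.inl (hne x hx))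
      -- integration by parts
      have hibp : ∫ x in ε..r, x ^ (-δ) * f x ^ 2
          = r ^ (-δ) * G r - ε ^ (-δ) * G ε - ∫ x in ε..r, (-δ * x ^ (-δ - 1)) * G x := by
        refine intervalIntegral.integral_mul_deriv_eq_deriv_mul hud hGd ?_ ?_
        · exact (continuousOn_const.mul hcδ1).intervalIntegrable
        · exact ((hfcOn.mono hsubIcc).pow 2).intervalIntegrable
      have hGcont : ContinuousOn G (Set.uIcc ε r) := fun x hx =>
        (hGd x hx).continuousAt.continuousWithinAt
      -- bound the boundary and bulk terms
      have hrpow : ∀ x : ℝ, 0 < x → x ^ (-δ - 1) * x = x ^ (-δ) := by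
        intro x hx0
        calc x ^ (-δ - 1) * x = x ^ (-δ - 1) * x ^ (1:ℝ) := by rw [Real.rpow_one]
          _ = x ^ (-δ - 1 + 1) := (Real.rpow_add hx0 _ _).symm
          _ = x ^ (-δ) := by norm_num
      have hmono : ∫ x in ε..r, x ^ (-δ - 1) * G x ≤ ∫ x in ε..r, a * x ^ (-δ) := by
        apply intervalIntegral.integral_mono_on hεr
        · exact (hcδ1.mul hGcont).intervalIntegrable
        · exact (continuousOn_const.mul hcδ).intervalIntegrable
        · intro x hx
          have hx' : x ∈ Set.Ioo 0 rstar := hsub (by rwa [Set.uIcc_of_le hεr])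
          have h2 : (0:ℝ) ≤ x ^ (-δ - 1) := (Real.rpow_pos_of_pos hx'.1 _).le
          calc x ^ (-δ - 1) * G x ≤ x ^ (-δ - 1) * (a * x) :=
                mul_le_mul_of_nonneg_left (hGa x hx') h2
            _ = a * (x ^ (-δ - 1) * x) := by ring
            _ = a * x ^ (-δ) := by rw [hrpow x hx'.1]
      have hIrpow : ∫ x in ε..r, x ^ (-δ) = (r ^ (1 - δ) - ε ^ (1 - δ)) / (1 - δ) := by
        rw [integral_rpow (Or.inl (by linarith : (-1:ℝ) < -δ))]
        rw [show -δ + 1 = 1 - δ by ring]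
      have hbulk : ∫ x in ε..r, x ^ (-δ - 1) * G x ≤ a * r ^ (1 - δ) / (1 - δ) := by
        refine le_trans hmono ?_
        rw [intervalIntegral.integral_const_mul, hIrpow]
        have hεp : (0:ℝ) ≤ ε ^ (1 - δ) := (Real.rpow_pos_of_pos hε0 _).le
        calc a * ((r ^ (1 - δ) - ε ^ (1 - δ)) / (1 - δ)) ≤ a * (r ^ (1 - δ) / (1 - δ)) :=
              mul_le_mul_of_nonneg_left ((div_le_div_iff_of_pos_right h1δ).2 (by linarith)) ha0
          _ = a * r ^ (1 - δ) / (1 - δ) := (mul_div_assoc _ _ _).symm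
      have e1 : r ^ (-δ) * G r ≤ a * r ^ (1 - δ) := by
        have h2 : (0:ℝ) ≤ r ^ (-δ) := (Real.rpow_pos_of_pos hr0 _).le
        calc r ^ (-δ) * G r ≤ r ^ (-δ) * (a * r) :=
              mul_le_mul_of_nonneg_left (hGa r hrr) h2
          _ = a * (r ^ (-δ) * r ^ (1:ℝ)) := by rw [Real.rpow_one]; ring
          _ = a * r ^ (1 - δ) := by
              rw [← Real.rpow_add hr0, show -δ + 1 = 1 - δ by ring]
      have e2 : 0 ≤ ε ^ (-δ) * G ε :=
        mul_nonneg (Real.rpow_pos_of_pos hε0 _).le (hGnn ε hε0.le)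
      have hmid : -(∫ x in ε..r, (-δ * x ^ (-δ - 1)) * G x)
          = δ * ∫ x in ε..r, x ^ (-δ - 1) * G x := by
        rw [← intervalIntegral.integral_neg, ← intervalIntegral.integral_const_mul]
        exact intervalIntegral.integral_congr (fun x _ => by ring)
      have hsum : ∫ x in ε..r, x ^ (-δ) * f x ^ 2 ≤ a * r ^ (1 - δ) / (1 - δ) := by
        have hne' : (1 - δ) ≠ 0 := ne_of_gt h1δ
        have h3 : δ * ∫ x in ε..r, x ^ (-δ - 1) * G x ≤ δ * (a * r ^ (1 - δ) / (1 - δ)) :=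
          mul_le_mul_of_nonneg_left hbulk hδ0.le
        have h4 : a * r ^ (1 - δ) + δ * (a * r ^ (1 - δ) / (1 - δ))
            = a * r ^ (1 - δ) / (1 - δ) := by
          field_simp
          ring
        rw [hibp]
        have hre : r ^ (-δ) * G r - ε ^ (-δ) * G ε - (∫ x in ε..r, (-δ * x ^ (-δ - 1)) * G x)
            = r ^ (-δ) * G r - ε ^ (-δ) * G ε + δ * ∫ x in ε..r, x ^ (-δ - 1) * G x := by
          rw [← hmid]; ring
        rw [hre]
        linarith [h3, e1, e2]
      -- combine
      have hptw : ∀ x ∈ Set.Icc ε r, |3 * f x ^ 2 * f' x| ≤ 3 * b * (x ^ (-δ) * f x ^ 2) := by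
        intro x hx
        have hx' : x ∈ Set.Ioo 0 rstar := hsub (by rwa [Set.uIcc_of_le hεr])
        have hx0 : 0 < x := hx'.1
        have hpow : (0:ℝ) < x ^ δ := Real.rpow_pos_of_pos hx0 δ
        have hfp : |f' x| ≤ b * x ^ (-δ) := by
          rw [Real.rpow_neg hx0.le, ← div_eq_mul_inv, le_div_iff₀ hpow]
          have := hb x hx'
          linarith
        have : |3 * f x ^ 2 * f' x| = 3 * f x ^ 2 * |f' x| := by
          rw [abs_mul, abs_of_nonneg (by positivity : (0:ℝ) ≤ 3 * f x ^ 2)]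
        rw [this]
        calc 3 * f x ^ 2 * |f' x| ≤ 3 * f x ^ 2 * (b * x ^ (-δ)) :=
              mul_le_mul_of_nonneg_left hfp (by positivity)
          _ = 3 * b * (x ^ (-δ) * f x ^ 2) := by ring
      have habs : |f r ^ 3 - f ε ^ 3| ≤ 3 * b * (a * r ^ (1 - δ) / (1 - δ)) := by
        rw [← hcube]
        calc |∫ x in ε..r, 3 * f x ^ 2 * f' x| ≤ ∫ x in ε..r, |3 * f x ^ 2 * f' x| :=
              intervalIntegral.abs_integral_le_integral_abs hεr
          _ ≤ ∫ x in ε..r, 3 * b * (x ^ (-δ) * f x ^ 2) := by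
              apply intervalIntegral.integral_mono_on hεr
              · apply ContinuousOn.intervalIntegrable
                exact ((continuousOn_const.mul ((hfcOn.mono hsubIcc).pow 2)).mul
                  (hf'cont.mono hsubIcc)).abs
              · exact (continuousOn_const.mul (hcδ.mul ((hfcOn.mono hsubIcc).pow 2))).intervalIntegrable
              · exact hptw
          _ = 3 * b * ∫ x in ε..r, x ^ (-δ) * f x ^ 2 := intervalIntegral.integral_const_mul _ _
          _ ≤ 3 * b * (a * r ^ (1 - δ) / (1 - δ)) :=
              mul_le_mul_of_nonneg_left hsum (by positivity)
      calc |f r| ^ 3 = |f r ^ 3| := (abs_pow _ _).symm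
        _ = |f ε ^ 3 + (f r ^ 3 - f ε ^ 3)| := by ring_nf
        _ ≤ |f ε ^ 3| + |f r ^ 3 - f ε ^ 3| := abs_add_le _ _
        _ ≤ |f ε| ^ 3 + 3 * b * (a * r ^ (1 - δ) / (1 - δ)) := by
            rw [abs_pow]; exact add_le_add_right habs _
        _ = |f ε| ^ 3 + 3 * a * b / (1 - δ) * r ^ (1 - δ) := by ring
    -- let ε → 0
    have hcf : ContinuousAt f 0 := hfc 0 ⟨le_refl _, hr.le⟩
    have htend : Tendsto (fun ε => |f ε| ^ 3 + 3 * a * b / (1 - δ) * r ^ (1 - δ))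
        (nhdsWithin 0 (Set.Ioi 0)) (nhds (3 * a * b / (1 - δ) * r ^ (1 - δ))) := by
      have h1 : Tendsto (fun ε => |f ε| ^ 3 + 3 * a * b / (1 - δ) * r ^ (1 - δ))
          (nhds 0) (nhds (|f 0| ^ 3 + 3 * a * b / (1 - δ) * r ^ (1 - δ))) :=
        ((hcf.abs.pow 3).add continuousAt_const).tendsto
      rw [hf0] at h1
      norm_num at h1
      exact h1.mono_left nhdsWithin_le_nhds
    refine ge_of_tendsto htend ?_
    filter_upwards [Ioo_mem_nhdsGT_of_mem (Set.left_mem_Ico.2 hr0)] with ε hε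
    exact hεstep ε hε
  intro r hrI
  rcases hrI.1.eq_or_lt with h0 | h0
  · rw [← h0, hf0]
    simp [Real.zero_rpow (ne_of_gt h1δ)]
  rcases hrI.2.eq_or_lt with h1 | h1
  · subst h1
    have hlhs : Tendsto (fun x => |f x| ^ 3) (nhdsWithin r (Set.Iio r)) (nhds (|f r| ^ 3)) :=
      (((hfc r ⟨h0.le, le_refl _⟩).abs.pow 3)).tendsto.mono_left nhdsWithin_le_nhds
    have hrhs : Tendsto (fun x => 3 * a * b / (1 - δ) * x ^ (1 - δ))
        (nhdsWithin r (Set.Iio r)) (nhds (3 * a * b / (1 - δ) * r ^ (1 - δ))) :=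
      (continuousAt_const.mul (Real.continuousAt_rpow_const r _ (Or.inl h0.ne'))).tendsto.mono_left
        nhdsWithin_le_nhds
    refine le_of_tendsto_of_tendsto hlhs hrhs ?_
    filter_upwards [Ioo_mem_nhdsLT_of_mem (⟨h0, le_refl r⟩ : r ∈ Set.Ioc 0 r)] with x hx
    exact key x hx
  · exact key r ⟨h0, h1⟩
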